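/- arXiv:2010.00266 — 4 statements merged into one kernel-verified Lean document; each statement's English description precedes it below -/
import Mathlib

section
/- Let u : A → B, v : A → C and w : B → C be functors with w ∘ u = v, and assume v is a Grothendieck fibration. Then for every object b of B, the canonical functor from the comma category u/b to the slice category C/w(b), sending an object (a, f : u(a) → b) to (v(a), w(f)) and a morphism g to v(g), is a Grothendieck fibration. -/
open CategoryTheory

universe v₁ u₁ v₂ u₂ v₃ u₃

namespace Paper

variable {A : Type u₁} [Category.{v₁} A] {B : Type u₂} [Category.{v₂} B]
  {C : Type u₃} [Category.{v₃} C]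

/-- Given functors `u : A ⥤ B` and `w : B ⥤ C` (with `v := u ⋙ w`, so that `w ∘ u = v`)
and an object `b` of `B`, the canonical functor from the comma category `u/b` to the
slice category `C/w(b)`, sending an object `(a, f : u(a) ⟶ b)` to `(v(a), w(f))` and a
morphism `g` to `v(g)`. -/
@[simps]
def commaToSlice (u : A ⥤ B) (w : B ⥤ C) (b : B) :
    CostructuredArrow u b ⥤ Over (w.obj b) where
  obj x := Over.mk (w.map x.hom)
  map {x y} g := Over.homMk ((u ⋙ w).map g.left)
    (by dsimp; rw [← w.map_comp, CostructuredArrow.w g])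

lemma over_mk_eq {X A₁ A₂ : C} (h : A₁ = A₂) (f₁ : A₁ ⟶ X) (f₂ : A₂ ⟶ X)
    (hf : f₁ = eqToHom h ≫ f₂) : Over.mk f₁ = Over.mk f₂ := by
  subst h; subst hf; simp

/-- Let `u : A ⥤ B`, `v : A ⥤ C` and `w : B ⥤ C` be functors with `w ∘ u = v`
(here `v := u ⋙ w`), and assume `v` is a Grothendieck fibration. Then for every object
`b` of `B`, the canonical functor `u/b ⥤ C/w(b)`, sending `(a, f : u(a) ⟶ b)` to
`(v(a), w(f))` and a morphism `g` to `v(g)`, is a Grothendieck fibration. -/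
theorem commaToSlice_isFibered (u : A ⥤ B) (w : B ⥤ C) (hv : (u ⋙ w).IsFibered)
    (b : B) : (commaToSlice u w b).IsFibered := by
  apply Functor.IsFibered.of_exists_isStronglyCartesian
  intro x R f
  obtain ⟨f₀, hf₀⟩ : ∃ g : R.left ⟶ (u ⋙ w).obj x.left, f.left = g := ⟨f.left, rfl⟩
  obtain ⟨a', φ, hφ⟩ := Functor.IsPreFibered.exists_isCartesian' (p := u ⋙ w) (a := x.left) f₀
  haveI := hφ
  haveI := hφ.toIsHomLift
  have hsc : (u ⋙ w).IsStronglyCartesian f₀ φ := inferInstance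
  refine ⟨CostructuredArrow.mk (u.map φ ≫ x.hom), CostructuredArrow.homMk φ rfl, ?_⟩
  have hd : (u ⋙ w).obj a' = R.left := IsHomLift.domain_eq (u ⋙ w) f₀ φ
  have hwφ : (u ⋙ w).map φ = eqToHom hd ≫ f₀ := by
    simpa using IsHomLift.fac' (u ⋙ w) f₀ φ
  have hRhom : R.hom = f₀ ≫ w.map x.hom := by rw [← hf₀]; exact (Over.w f).symm
  have hx' : (commaToSlice u w b).obj (CostructuredArrow.mk (u.map φ ≫ x.hom)) = R := by
    show Over.mk (w.map (u.map φ ≫ x.hom)) = R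
    rw [CostructuredArrow.eq_mk R]
    refine over_mk_eq hd _ _ ?_
    rw [show CostructuredArrow.hom R = R.hom from rfl, hRhom, w.map_comp, ← Category.assoc]
    conv_lhs => rw [show w.map (u.map φ) = (u ⋙ w).map φ from rfl, hwφ]
  refine { toIsHomLift := ?_, universal_property' := ?_ }
  · -- IsHomLift
    refine IsHomLift.of_commsq (commaToSlice u w b) f _ hx' rfl ?_
    apply CommaMorphism.ext
    · show ((u ⋙ w).map φ) ≫ (eqToHom (rfl :
          (commaToSlice u w b).obj x = (commaToSlice u w b).obj x)).left =
        (eqToHom hx').left ≫ f.left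
      rw [hwφ, hf₀]
      simp [Comma.eqToHom_left, Over.eqToHom_left]
      erw [Category.comp_id]
      rfl
    · apply Subsingleton.elim
  · -- universal property
    intro a'' g φ' hlift
    have hgf : g ≫ f = (commaToSlice u w b).map φ' :=
      IsHomLift.eq_of_isHomLift (commaToSlice u w b) (g ≫ f) φ'
    have hleft : g.left ≫ f₀ = (u ⋙ w).map φ'.left := by
      rw [← hf₀]
      have := congrArg Over.Hom.left hgf
      erw [Over.comp_left] at this
      simpa [commaToSlice, Over.comp_left] using this
    haveI : (u ⋙ w).IsHomLift (g.left ≫ f₀) φ'.left := by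
      rw [hleft]; exact IsHomLift.map (u ⋙ w) φ'.left
    obtain ⟨χ₀, ⟨hχlift, hχfac⟩, hχuniq⟩ :=
      Functor.IsStronglyCartesian.universal_property (p := u ⋙ w) f₀ φ g.left
        (g.left ≫ f₀) rfl φ'.left
    refine ⟨CostructuredArrow.homMk χ₀ ?_, ⟨?_, ?_⟩, ?_⟩
    · show u.map χ₀ ≫ (u.map φ ≫ x.hom) = a''.hom
      rw [← Category.assoc, ← u.map_comp, hχfac, CostructuredArrow.w φ']
    · -- IsHomLift of χ
      haveI := hχlift
      refine IsHomLift.of_commsq (commaToSlice u w b) g _ rfl hx' ?_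
      apply CommaMorphism.ext
      · show ((u ⋙ w).map χ₀) ≫ (eqToHom hx').left = (eqToHom (rfl :
            (commaToSlice u w b).obj a'' = (commaToSlice u w b).obj a'')).left ≫ g.left
        have hχl : (u ⋙ w).map χ₀ = eqToHom (IsHomLift.domain_eq (u ⋙ w) g.left χ₀) ≫
            g.left ≫ eqToHom (IsHomLift.codomain_eq (u ⋙ w) g.left χ₀).symm :=
          IsHomLift.fac' (u ⋙ w) g.left χ₀
        rw [hχl]
        simp [Comma.eqToHom_left, Over.eqToHom_left]
        have e : ∀ {X Y : C} {Z : C} (h1 : X = X) (h2 : Y = Z) (h3 : Z = Y) (k : X ⟶ Y),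
            (eqToHom h1 ≫ k ≫ eqToHom h2) ≫ eqToHom h3 = k := by intros; simp
        exact e _ _ _ _
      · apply Subsingleton.elim
    · -- factorization
      apply CommaMorphism.ext
      · show χ₀ ≫ φ = φ'.left
        exact hχfac
      · apply Subsingleton.elim
    · -- uniqueness
      intro ψ ⟨hψl, hψc⟩
      apply CommaMorphism.ext
      · show ψ.left = χ₀
        refine hχuniq ψ.left ⟨?_, ?_⟩
        · refine IsHomLift.of_fac' (u ⋙ w) g.left ψ.left rfl hd ?_
          have := congrArg Over.Hom.left
            (IsHomLift.fac' (commaToSlice u w b) g ψ)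
          erw [Over.comp_left, Over.eqToHom_left, Over.comp_left, Over.eqToHom_left] at this
          exact this
        · have := congrArg CommaMorphism.left hψc
          simpa [commaToSlice] using this
      · apply Subsingleton.elim


end Paper
end

section
/- Let C be a small category and S = ([n]; c_1, …, c_n) an object of Δ≀C. The functor P : μ/S → Δ/[n], sending an object (([m], c), (φ; (f_{i',i})) : μ([m], c) → S) of the comma category μ/S to the object ([m], φ : [m] → [n]) of the slice Δ/[n], and a morphism (ψ, g) to ψ, is a Grothendieck fibration. -/
open CategoryTheory

universe v u

namespace Paper


/-- An object of the wreath product `Δ ≀ C`: a tuple `([n]; c_1, …, c_n)` where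
`c_1, …, c_n` are objects of `C` (indexed here by `Fin n`). -/
structure Wreath (C : Type u) [Category.{v} C] where
  /-- the integer `n` such that the underlying simplex is `[n]` -/
  len : ℕ
  /-- the objects `c_1, …, c_n` of `C` -/
  obj : Fin len → C

namespace Wreath

variable {C : Type u} [Category.{v} C]

/-- A morphism `(φ; (f_{i',i})) : ([n]; c_1, …, c_n) ⟶ ([n']; c'_1, …, c'_{n'})` of
`Δ ≀ C`: a monotone map `φ : [n] ⟶ [n']` together with morphisms
`f_{i',i} : c_i ⟶ c'_{i'}` for each pair `(i, i')` with `1 ≤ i ≤ n` and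
`φ(i-1) < i' ≤ φ(i)`. The index `i ∈ {1, …, n}` is represented by `i : Fin n`, so that
`i - 1` is `i.castSucc` and `i` is `i.succ` as elements of `[n] = Fin (n+1)`, and
similarly for `i'`. -/
structure Hom (x y : Wreath C) where
  /-- the underlying monotone map `φ : [n] ⟶ [n']` -/
  φ : Fin (x.len + 1) →o Fin (y.len + 1)
  /-- the components `f_{i',i} : c_i ⟶ c'_{i'}` for `φ(i-1) < i' ≤ φ(i)` -/
  app : ∀ (i : Fin x.len) (i' : Fin y.len),
    φ i.castSucc < i'.succ → i'.succ ≤ φ i.succ → (x.obj i ⟶ y.obj i')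

theorem Hom.ext' {x y : Wreath C} {F G : Hom x y} (hφ : F.φ = G.φ)
    (happ : ∀ i i' hF₁ hF₂ hG₁ hG₂, F.app i i' hF₁ hF₂ = G.app i i' hG₁ hG₂) :
    F = G := by
  obtain ⟨φF, appF⟩ := F
  obtain ⟨φG, appG⟩ := G
  obtain rfl : φF = φG := hφ
  simp only [mk.injEq, heq_eq_eq, true_and]
  funext i i' h₁ h₂
  exact happ i i' h₁ h₂ h₁ h₂

/-- Uniqueness of the middle index in the composition of morphisms of `Δ ≀ C`. -/
theorem mid_unique {a b : ℕ} (ψ : Fin (a + 1) →o Fin (b + 1))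
    {t : Fin b} {j j' : Fin a}
    (hC : ψ j.castSucc < t.succ) (hD : t.succ ≤ ψ j.succ)
    (hC' : ψ j'.castSucc < t.succ) (hD' : t.succ ≤ ψ j'.succ) : j = j' := by
  by_contra hne
  rcases Nat.lt_or_ge (j : ℕ) (j' : ℕ) with h | h
  · have hle : (j.succ : Fin (a + 1)) ≤ j'.castSucc := by
      simp only [Fin.le_def, Fin.val_succ, Fin.coe_castSucc]; omega
    exact absurd (hD.trans (ψ.monotone hle)) (not_le.mpr hC')
  · have hne' : (j : ℕ) ≠ (j' : ℕ) := fun h => hne (Fin.ext h)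
    have hle : (j'.succ : Fin (a + 1)) ≤ j.castSucc := by
      simp only [Fin.le_def, Fin.val_succ, Fin.coe_castSucc]; omega
    exact absurd (hD'.trans (ψ.monotone hle)) (not_le.mpr hC)

section comp

variable {x y z : Wreath C} (F : Hom x y) (G : Hom y z)
  (i : Fin x.len) (i'' : Fin z.len)

/-- The middle index `i'`, with `φ(i-1) < i' ≤ φ(i)` and `φ'(i'-1) < i'' ≤ φ'(i')`,
used in the composition of morphisms of `Δ ≀ C`. -/
def midIdx (h₁ : G.φ (F.φ i.castSucc) < i''.succ) (h₂ : i''.succ ≤ G.φ (F.φ i.succ)) :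
    Fin y.len :=
  ((Finset.univ.filter fun k => i''.succ ≤ G.φ k).min'
      ⟨F.φ i.succ, by simp only [Finset.mem_filter, Finset.mem_univ, true_and]; exact h₂⟩).pred
    (by
      intro h0
      set s : Finset (Fin (y.len + 1)) := Finset.univ.filter fun k => i''.succ ≤ G.φ k
      have hne : s.Nonempty :=
        ⟨F.φ i.succ, by simp only [s, Finset.mem_filter, Finset.mem_univ, true_and]; exact h₂⟩
      have hm : i''.succ ≤ G.φ (s.min' hne) := by
        have := s.min'_mem hne
        simpa only [s, Finset.mem_filter, Finset.mem_univ, true_and] using this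
      have hle : G.φ (s.min' hne) ≤ G.φ (F.φ i.castSucc) :=
        G.φ.monotone (h0 ▸ Fin.zero_le _)
      exact absurd h₁ (not_lt.mpr (hm.trans hle)))

variable (h₁ : G.φ (F.φ i.castSucc) < i''.succ) (h₂ : i''.succ ≤ G.φ (F.φ i.succ))

theorem midIdx_specA : F.φ i.castSucc < (midIdx F G i i'' h₁ h₂).succ := by
  rw [midIdx, Fin.succ_pred]
  set s : Finset (Fin (y.len + 1)) := Finset.univ.filter fun k => i''.succ ≤ G.φ k
  have hne : s.Nonempty :=
    ⟨F.φ i.succ, by simp only [s, Finset.mem_filter, Finset.mem_univ, true_and]; exact h₂⟩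
  have hm : i''.succ ≤ G.φ (s.min' hne) := by
    have := s.min'_mem hne
    simpa only [s, Finset.mem_filter, Finset.mem_univ, true_and] using this
  by_contra hle
  push_neg at hle
  exact absurd h₁ (not_lt.mpr (hm.trans (G.φ.monotone hle)))

theorem midIdx_specB : (midIdx F G i i'' h₁ h₂).succ ≤ F.φ i.succ := by
  rw [midIdx, Fin.succ_pred]
  exact Finset.min'_le _ _ (by simp only [Finset.mem_filter, Finset.mem_univ, true_and]; exact h₂)

theorem midIdx_specC : G.φ (midIdx F G i i'' h₁ h₂).castSucc < i''.succ := by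
  set s : Finset (Fin (y.len + 1)) := Finset.univ.filter fun k => i''.succ ≤ G.φ k
  have hne : s.Nonempty :=
    ⟨F.φ i.succ, by simp only [s, Finset.mem_filter, Finset.mem_univ, true_and]; exact h₂⟩
  by_contra hle
  push_neg at hle
  have hmem : (midIdx F G i i'' h₁ h₂).castSucc ∈ s := by
    simp only [s, Finset.mem_filter, Finset.mem_univ, true_and]; exact hle
  have hge := s.min'_le _ hmem
  have hlt : (midIdx F G i i'' h₁ h₂).castSucc < s.min' hne := by
    have : ((midIdx F G i i'' h₁ h₂).succ : Fin (y.len + 1)) = s.min' hne := Fin.succ_pred _ _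
    rw [← this]
    exact Fin.castSucc_lt_succ
  exact absurd hge (not_le.mpr hlt)

theorem midIdx_specD : i''.succ ≤ G.φ (midIdx F G i i'' h₁ h₂).succ := by
  rw [midIdx, Fin.succ_pred]
  set s : Finset (Fin (y.len + 1)) := Finset.univ.filter fun k => i''.succ ≤ G.φ k
  have hne : s.Nonempty :=
    ⟨F.φ i.succ, by simp only [s, Finset.mem_filter, Finset.mem_univ, true_and]; exact h₂⟩
  have := s.min'_mem hne
  simpa only [s, Finset.mem_filter, Finset.mem_univ, true_and] using this

end comp

/-- Composition in `Δ ≀ C`: the underlying monotone maps compose, and the components are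
`f''_{i'',i} := f'_{i'',i'} ∘ f_{i',i}` where `i'` is the unique index with
`φ(i-1) < i' ≤ φ(i)` and `φ'(i'-1) < i'' ≤ φ'(i')`. -/
def Hom.comp {x y z : Wreath C} (F : Hom x y) (G : Hom y z) : Hom x z where
  φ := G.φ.comp F.φ
  app i i'' h₁ h₂ :=
    F.app i (midIdx F G i i'' h₁ h₂) (midIdx_specA F G i i'' h₁ h₂)
        (midIdx_specB F G i i'' h₁ h₂) ≫
      G.app (midIdx F G i i'' h₁ h₂) i'' (midIdx_specC F G i i'' h₁ h₂)
        (midIdx_specD F G i i'' h₁ h₂)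

/-- The composition in `Δ ≀ C` can be computed using any valid middle index. -/
theorem Hom.comp_app_eq {x y z : Wreath C} (F : Hom x y) (G : Hom y z)
    {i : Fin x.len} {i'' : Fin z.len} (h₁ : G.φ (F.φ i.castSucc) < i''.succ)
    (h₂ : i''.succ ≤ G.φ (F.φ i.succ)) (j : Fin y.len)
    (hA : F.φ i.castSucc < j.succ) (hB : j.succ ≤ F.φ i.succ)
    (hC : G.φ j.castSucc < i''.succ) (hD : i''.succ ≤ G.φ j.succ) :
    (F.comp G).app i i'' h₁ h₂ = F.app i j hA hB ≫ G.app j i'' hC hD := by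
  have huniq : midIdx F G i i'' h₁ h₂ = j :=
    mid_unique G.φ (midIdx_specC F G i i'' h₁ h₂) (midIdx_specD F G i i'' h₁ h₂) hC hD
  subst huniq
  rfl

/-- The identity morphism of `Δ ≀ C`. -/
def Hom.id (x : Wreath C) : Hom x x where
  φ := OrderHom.id
  app i i' h₁ h₂ := eqToHom (congrArg x.obj (by
    have h₁' : (i : ℕ) < (i' : ℕ) + 1 := h₁
    have h₂' : (i' : ℕ) + 1 ≤ (i : ℕ) + 1 := h₂
    exact Fin.ext (by omega)))

instance category : Category.{max v 0} (Wreath C) where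
  Hom := Hom
  id := Hom.id
  comp := Hom.comp
  id_comp {x y} F := by
    refine Hom.ext' rfl fun i i'' h₁ h₂ hG₁ hG₂ => ?_
    refine (Hom.comp_app_eq (Hom.id x) F h₁ h₂ i
      (Fin.castSucc_lt_succ (i := i)) (le_refl _) hG₁ hG₂).trans ?_
    have e : (Hom.id x).app i i (Fin.castSucc_lt_succ (i := i)) (le_refl _) = 𝟙 (x.obj i) := rfl
    rw [e, Category.id_comp]
  comp_id {x y} F := by
    refine Hom.ext' rfl fun i i'' h₁ h₂ hG₁ hG₂ => ?_
    refine (Hom.comp_app_eq F (Hom.id y) h₁ h₂ i'' hG₁ hG₂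
      (Fin.castSucc_lt_succ (i := i'')) (le_refl _)).trans ?_
    have e : (Hom.id y).app i'' i'' (Fin.castSucc_lt_succ (i := i'')) (le_refl _) = 𝟙 (y.obj i'') := rfl
    rw [e, Category.comp_id]
  assoc {w x y z} F G H := by
    refine Hom.ext' rfl fun i l h₁ h₂ h₁' h₂' => ?_
    set k := midIdx (F.comp G) H i l h₁ h₂ with hk
    have kA := midIdx_specA (F.comp G) H i l h₁ h₂
    have kB := midIdx_specB (F.comp G) H i l h₁ h₂
    have kC := midIdx_specC (F.comp G) H i l h₁ h₂
    have kD := midIdx_specD (F.comp G) H i l h₁ h₂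
    set j := midIdx F G i k kA kB with hj
    have jA := midIdx_specA F G i k kA kB
    have jB := midIdx_specB F G i k kA kB
    have jC := midIdx_specC F G i k kA kB
    have jD := midIdx_specD F G i k kA kB
    have le₁ : G.φ j.castSucc ≤ k.castSucc := Fin.le_castSucc_iff.mpr jC
    have cond₁ : H.φ (G.φ j.castSucc) < l.succ := lt_of_le_of_lt (H.φ.monotone le₁) kC
    have cond₂ : l.succ ≤ H.φ (G.φ j.succ) := kD.trans (H.φ.monotone jD)
    calc ((F.comp G).comp H).app i l h₁ h₂
        = (F.app i j jA jB ≫ G.app j k jC jD) ≫ H.app k l kC kD := by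
          rw [show ((F.comp G).comp H).app i l h₁ h₂ =
            (F.comp G).app i k kA kB ≫ H.app k l kC kD from rfl,
            show (F.comp G).app i k kA kB = F.app i j jA jB ≫ G.app j k jC jD from rfl]
      _ = F.app i j jA jB ≫ (G.app j k jC jD ≫ H.app k l kC kD) := Category.assoc _ _ _
      _ = F.app i j jA jB ≫ (G.comp H).app j l cond₁ cond₂ := by
            rw [Hom.comp_app_eq G H cond₁ cond₂ k jC jD kC kD]
      _ = (F.comp (G.comp H)).app i l h₁' h₂' := by
            rw [Hom.comp_app_eq F (G.comp H) h₁' h₂' j jA jB cond₁ cond₂]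

/-- The functor `μ : Δ × C ⥤ Δ ≀ C`, sending `([n], c)` to `([n]; c, …, c)` and a
morphism `(φ, f)` to `(φ; (f_{i',i}))` with all components equal to `f`. -/
def mu (C : Type u) [Category.{v} C] : SimplexCategory × C ⥤ Wreath C where
  obj p := ⟨p.1.len, fun _ => p.2⟩
  map g := { φ := g.1.toOrderHom, app := fun _ _ _ _ => g.2 }
  map_id _ := Hom.ext' rfl fun _ _ _ _ _ _ => rfl
  map_comp _ _ := Hom.ext' rfl fun _ _ _ _ _ _ => rfl

end Wreath


namespace Wreath

variable {C : Type u} [Category.{v} C]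

/-- The functor `P : μ/S ⥤ Δ/[n]` associated to an object `S = ([n]; c_1, …, c_n)` of
`Δ ≀ C`, sending an object `(([m], c), (φ; (f_{i',i})) : μ([m], c) ⟶ S)` of the comma
category `μ/S` to the object `([m], φ : [m] ⟶ [n])` of the slice `Δ/[n]`, and a morphism
`(ψ, g)` to `ψ`. -/
@[simps]
def P (S : Wreath C) :
    CostructuredArrow (mu C) S ⥤ Over (SimplexCategory.mk S.len) where
  obj x := Over.mk (SimplexCategory.Hom.mk x.hom.φ : x.left.1 ⟶ SimplexCategory.mk S.len)
  map {x y} g := Over.homMk g.left.1 (by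
    apply SimplexCategory.Hom.ext
    exact congrArg Hom.φ (CostructuredArrow.w g))

end Wreath

/-- Let `C` be a category and `S = ([n]; c_1, …, c_n)` an object of `Δ ≀ C`. The functor
`P : μ/S ⥤ Δ/[n]`, sending `(([m], c), (φ; (f_{i',i})) : μ([m], c) ⟶ S)` to
`([m], φ : [m] ⟶ [n])` and a morphism `(ψ, g)` to `ψ`, is a Grothendieck fibration. -/
theorem P_isFibered {C : Type u} [Category.{v} C] (S : Wreath C) :
    (Wreath.P S).IsFibered := by
  apply Functor.IsFibered.of_exists_isStronglyCartesian
  intro a R f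
  -- the map `g = (f.left, 𝟙 c)` in `Δ × C`
  let g : ((R.left, a.left.2) : SimplexCategory × C) ⟶ a.left :=
    ((f.left : R.left ⟶ a.left.1), 𝟙 a.left.2)
  -- the cartesian lift `b` and the cartesian morphism `Φ : b ⟶ a`
  let b : CostructuredArrow (Wreath.mu C) S :=
    CostructuredArrow.mk ((Wreath.mu C).map g ≫ a.hom)
  let Φ : b ⟶ a := CostructuredArrow.homMk g rfl
  have hb : (Wreath.P S).obj b = R := by
    have h1 : (SimplexCategory.Hom.mk b.hom.φ : b.left.1 ⟶ SimplexCategory.mk S.len)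
        = f.left ≫ ((Wreath.P S).obj a).hom := rfl
    show Over.mk (SimplexCategory.Hom.mk b.hom.φ : b.left.1 ⟶ SimplexCategory.mk S.len) = R
    rw [h1, Over.w f]
    rfl
  refine ⟨b, Φ, ?_⟩
  have hlift : (Wreath.P S).IsHomLift f Φ := by
    apply IsHomLift.of_commsq _ _ _ hb rfl
    apply Over.OverMorphism.ext
    have e1 : (((Wreath.P S).map Φ ≫ eqToHom rfl).left : _ ⟶ _) = f.left := by
      simp only [eqToHom_refl, Category.comp_id]; rfl
    rw [e1]
    have e2 : ((eqToHom hb ≫ f).left : _ ⟶ _) = (eqToHom hb).left ≫ f.left := rfl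
    rw [e2, Over.eqToHom_left]
    exact (Category.id_comp _).symm
  refine { toIsHomLift := hlift, universal_property' := ?_ }
  intro a' g' φ' hφ'
  have hleft : g'.left ≫ f.left = φ'.left.1 := by
    have h := IsHomLift.eq_of_isHomLift (Wreath.P S) (g' ≫ f) φ'
    exact congrArg CommaMorphism.left h
  have h1 : (((g'.left, φ'.left.2) : (a'.left : SimplexCategory × C) ⟶ b.left)) ≫ g
      = φ'.left := Prod.ext hleft (Category.comp_id _)
  have hw' : (Wreath.mu C).map (((g'.left, φ'.left.2) :
      (a'.left : SimplexCategory × C) ⟶ b.left)) ≫ b.hom = a'.hom := by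
    calc (Wreath.mu C).map ((g'.left, φ'.left.2) :
          (a'.left : SimplexCategory × C) ⟶ b.left) ≫ b.hom
        = (Wreath.mu C).map ((((g'.left, φ'.left.2) :
            (a'.left : SimplexCategory × C) ⟶ b.left)) ≫ g) ≫ a.hom := by
          rw [Functor.map_comp, Category.assoc]; rfl
      _ = (Wreath.mu C).map φ'.left ≫ a.hom := by rw [h1]
      _ = a'.hom := CostructuredArrow.w φ'
  let χ : a' ⟶ b := CostructuredArrow.homMk
    (((g'.left, φ'.left.2) : (a'.left : SimplexCategory × C) ⟶ b.left)) hw'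
  refine ⟨χ, ⟨?_, ?_⟩, ?_⟩
  · -- `χ` lifts `g'`
    apply IsHomLift.of_commsq _ _ _ rfl hb
    apply Over.OverMorphism.ext
    have e1 : (((Wreath.P S).map χ ≫ eqToHom hb).left : _ ⟶ _)
        = g'.left ≫ (eqToHom hb).left := rfl
    rw [e1, Over.eqToHom_left]
    simp only [eqToHom_refl, Over.id_left, Category.id_comp]
    exact Category.comp_id g'.left
  · -- `χ ≫ Φ = φ'`
    apply CostructuredArrow.hom_ext
    exact h1
  · -- uniqueness
    rintro χ₂ ⟨h2lift, h2comp⟩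
    apply CostructuredArrow.hom_ext
    show χ₂.left = χ.left
    have e2 : χ₂.left.2 = φ'.left.2 := by
      have h := congrArg (fun (t : a' ⟶ a) => t.left.2) h2comp
      exact (Category.comp_id χ₂.left.2).symm.trans h
    have e1 : χ₂.left.1 = g'.left := by
      have h := IsHomLift.fac' (Wreath.P S) g' χ₂
      have h' := congrArg Over.Hom.left h
      rw [Over.comp_left, Over.comp_left, Over.eqToHom_left, Over.eqToHom_left] at h'
      simp at h'
      exact h'.trans (Category.comp_id _)
    exact Prod.ext e1 e2

end Paper
end

section
/- Let C be a small category, S = ([n]; c_1, …, c_n) an object of Δ≀C, and P : μ/S → Δ/[n] the functor sending (([m], c), (φ; (f_{i',i}))) to ([m], φ) and (ψ, g) to ψ. For every object ([m], φ : [m] → [n]) of Δ/[n], the fiber of P over it — the subcategory of μ/S of objects sent to ([m], φ) and morphisms sent to the identity — is isomorphic to the category of elements of the presheaf on C given by a ↦ ∏_{φ(0) < i ≤ φ(m)} Hom_C(a, c_i). -/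
open CategoryTheory

universe v u

namespace Paper


/-- The presheaf on `C` associated to an object `S = ([n]; c_1, …, c_n)` of `Δ ≀ C` and
an object `([m], φ : [m] ⟶ [n])` of `Δ/[n]`, given on objects by
`a ↦ ∏_{φ(0) < i ≤ φ(m)} Hom_C(a, c_i)`. -/
@[simps]
def fiberPresheaf {C : Type u} [Category.{v} C] (S : Wreath C) (x : SimplexCategory)
    (φ : x ⟶ SimplexCategory.mk S.len) : Cᵒᵖ ⥤ Type v where
  obj a := ∀ i : Fin S.len, φ.toOrderHom 0 < i.succ →
    i.succ ≤ φ.toOrderHom (Fin.last x.len) → (a.unop ⟶ S.obj i)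
  map g := TypeCat.ofHom fun f => fun i h₁ h₂ => g.unop ≫ f i h₁ h₂


namespace FP

open Wreath Opposite

variable {C : Type u} [Category.{v} C]

/-- Choice of the index `j` with `ψ(j-1) < i ≤ ψ(j)`. -/
def pick {m n : ℕ} (ψ : Fin (m + 1) →o Fin (n + 1)) (i : Fin n)
    (h₁ : ψ 0 < i.succ) (h₂ : i.succ ≤ ψ (Fin.last m)) : Fin m :=
  ((Finset.univ.filter fun k => i.succ ≤ ψ k).min'
      ⟨Fin.last m, by simp only [Finset.mem_filter, Finset.mem_univ, true_and]; exact h₂⟩).pred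
    (by
      intro h0
      set s : Finset (Fin (m + 1)) := Finset.univ.filter fun k => i.succ ≤ ψ k with hs
      have hne : s.Nonempty :=
        ⟨Fin.last m, by simp only [hs, Finset.mem_filter, Finset.mem_univ, true_and]; exact h₂⟩
      have hm : i.succ ≤ ψ (s.min' hne) := by
        have := s.min'_mem hne
        simpa only [hs, Finset.mem_filter, Finset.mem_univ, true_and] using this
      rw [h0] at hm
      exact absurd h₁ (not_lt.mpr hm))

theorem pick_specA {m n : ℕ} (ψ : Fin (m + 1) →o Fin (n + 1)) (i : Fin n)
    (h₁ : ψ 0 < i.succ) (h₂ : i.succ ≤ ψ (Fin.last m)) :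
    ψ (pick ψ i h₁ h₂).castSucc < i.succ := by
  set s : Finset (Fin (m + 1)) := Finset.univ.filter fun k => i.succ ≤ ψ k with hs
  have hne : s.Nonempty :=
    ⟨Fin.last m, by simp only [hs, Finset.mem_filter, Finset.mem_univ, true_and]; exact h₂⟩
  by_contra hle
  push_neg at hle
  have hmem : (pick ψ i h₁ h₂).castSucc ∈ s := by
    simp only [hs, Finset.mem_filter, Finset.mem_univ, true_and]; exact hle
  have hge := s.min'_le _ hmem
  have hlt : (pick ψ i h₁ h₂).castSucc < s.min' hne := by
    have h' : ((pick ψ i h₁ h₂).succ : Fin (m + 1)) = s.min' hne := Fin.succ_pred _ _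
    rw [← h']
    exact Fin.castSucc_lt_succ
  exact absurd hge (not_le.mpr hlt)

theorem pick_specB {m n : ℕ} (ψ : Fin (m + 1) →o Fin (n + 1)) (i : Fin n)
    (h₁ : ψ 0 < i.succ) (h₂ : i.succ ≤ ψ (Fin.last m)) :
    i.succ ≤ ψ (pick ψ i h₁ h₂).succ := by
  rw [pick, Fin.succ_pred]
  set s : Finset (Fin (m + 1)) := Finset.univ.filter fun k => i.succ ≤ ψ k with hs
  have hne : s.Nonempty :=
    ⟨Fin.last m, by simp only [hs, Finset.mem_filter, Finset.mem_univ, true_and]; exact h₂⟩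
  have := s.min'_mem hne
  simpa only [hs, Finset.mem_filter, Finset.mem_univ, true_and] using this

variable {S : Wreath C} {x : SimplexCategory} {φ : x ⟶ SimplexCategory.mk S.len}

theorem left_fst (X : CostructuredArrow (mu C) S) (hX : (P S).obj X = Over.mk φ) :
    X.left.1 = x :=
  congrArg Comma.left hX

theorem phi_val (X : CostructuredArrow (mu C) S) (hX : (P S).obj X = Over.mk φ) :
    ∀ (k : Fin (X.left.1.len + 1)) (k' : Fin (x.len + 1)), (k : ℕ) = (k' : ℕ) →
      ((X.hom.φ k : Fin (S.len + 1)) : ℕ) = ((φ.toOrderHom k' : Fin (S.len + 1)) : ℕ) := by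
  have e := left_fst X hX
  subst e
  have h2 : HEq ((P S).obj X).hom (Over.mk φ).hom := by rw [hX]
  have h3 : SimplexCategory.Hom.mk (a := X.left.1) (b := SimplexCategory.mk S.len) X.hom.φ = φ :=
    eq_of_heq h2
  have h4 : X.hom.φ = φ.toOrderHom := congrArg SimplexCategory.Hom.toOrderHom h3
  intro k k' hk
  obtain rfl : k = k' := Fin.ext hk
  rw [h4]
  try rfl

theorem cond₁ (X : CostructuredArrow (mu C) S) (hX : (P S).obj X = Over.mk φ)
    {i : Fin S.len} (h₁ : φ.toOrderHom 0 < i.succ) : X.hom.φ 0 < i.succ := by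
  have h := phi_val X hX 0 0 rfl
  rw [Fin.lt_def] at h₁ ⊢
  exact h.trans_lt h₁

theorem cond₂ (X : CostructuredArrow (mu C) S) (hX : (P S).obj X = Over.mk φ)
    {i : Fin S.len} (h₂ : i.succ ≤ φ.toOrderHom (Fin.last x.len)) :
    i.succ ≤ X.hom.φ (Fin.last X.left.1.len) := by
  have hlen : X.left.1.len = x.len := congrArg SimplexCategory.len (left_fst X hX)
  have h := phi_val X hX (Fin.last _) (Fin.last _) (by simp [hlen])
  rw [Fin.le_def] at h₂ ⊢
  omega

/-- The element of the presheaf associated to an object of the fiber. -/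
def elemOf (X : CostructuredArrow (mu C) S) (hX : (P S).obj X = Over.mk φ) :
    (fiberPresheaf S x φ).obj (op X.left.2) := fun i h₁ h₂ =>
  X.hom.app (pick X.hom.φ i (cond₁ X hX h₁) (cond₂ X hX h₂)) i
    (pick_specA _ _ _ _) (pick_specB _ _ _ _)

/-- The natural transformation associated to an object of the fiber. -/
def natOf (X : CostructuredArrow (mu C) S) (hX : (P S).obj X = Over.mk φ) :
    yoneda.obj X.left.2 ⟶ fiberPresheaf S x φ where
  app b := TypeCat.ofHom fun g => fun i h₁ h₂ => g ≫ elemOf X hX i h₁ h₂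
  naturality b b' k := by
    ext g
    funext i h₁ h₂
    dsimp [fiberPresheaf]
    rw [Category.assoc]

/-- The wreath morphism associated to an element of the presheaf. -/
def homOf (a : C) (ξ : (fiberPresheaf S x φ).obj (op a)) :
    Wreath.Hom ((mu C).obj (x, a)) S where
  φ := φ.toOrderHom
  app j i h₁ h₂ := ξ i (lt_of_le_of_lt (φ.toOrderHom.monotone (Fin.zero_le _)) h₁)
      (le_trans h₂ (φ.toOrderHom.monotone (Fin.le_last _)))

theorem homOf_P (a : C) (ξ : (fiberPresheaf S x φ).obj (op a)) :
    (P S).obj (CostructuredArrow.mk (Y := (x, a)) (homOf a ξ)) = Over.mk φ := rfl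

theorem comp_app_eq' {a b c : Wreath C} (F : Wreath.Hom a b) (G : Wreath.Hom b c)
    (H : Wreath.Hom a c) (hH : H = F.comp G) {i : Fin a.len} {i'' : Fin c.len}
    (h₁ : H.φ i.castSucc < i''.succ) (h₂ : i''.succ ≤ H.φ i.succ) (j : Fin b.len)
    (hA : F.φ i.castSucc < j.succ) (hB : j.succ ≤ F.φ i.succ)
    (hC : G.φ j.castSucc < i''.succ) (hD : i''.succ ≤ G.φ j.succ) :
    H.app i i'' h₁ h₂ = F.app i j hA hB ≫ G.app j i'' hC hD := by
  subst hH
  exact Wreath.Hom.comp_app_eq F G h₁ h₂ j hA hB hC hD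

theorem app_index_congr {m : ℕ} {c : C} {b : Wreath C}
    (F : Wreath.Hom (Wreath.mk m fun _ => c) b) {j j' : Fin m} (e : j = j') (i : Fin b.len)
    (h₁ : F.φ j.castSucc < i.succ) (h₂ : i.succ ≤ F.φ j.succ)
    (h₁' : F.φ j'.castSucc < i.succ) (h₂' : i.succ ≤ F.φ j'.succ) :
    F.app j i h₁ h₂ = F.app j' i h₁' h₂' := by
  subst e; rfl

theorem simplex_eqToHom_val {x₁ x₂ : SimplexCategory} (e : x₁ = x₂) (k : Fin (x₁.len + 1)) :
    (((eqToHom e : x₁ ⟶ x₂).toOrderHom k : Fin (x₂.len + 1)) : ℕ) = (k : ℕ) := by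
  subst e; rfl

theorem hlift_val {Z₁ Z₂ : Functor.Fiber (P S) (Over.mk φ)} (g : Z₁ ⟶ Z₂)
    (k : Fin (Z₁.1.left.1.len + 1)) :
    ((g.1.left.1.toOrderHom k : Fin (Z₂.1.left.1.len + 1)) : ℕ) = (k : ℕ) := by
  haveI := g.2
  have hfac := CategoryTheory.IsHomLift.fac' (P S) (𝟙 (Over.mk φ)) g.1
  have hleft := congrArg Over.Hom.left hfac
  rw [Over.comp_left, Over.comp_left, Over.eqToHom_left, Over.eqToHom_left,
    Over.id_left] at hleft
  have e₁ : (Z₁.1.left.1 : SimplexCategory) = x := left_fst _ Z₁.2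
  have e₂ : (x : SimplexCategory) = Z₂.1.left.1 := (left_fst _ Z₂.2).symm
  have h5 : g.1.left.1 = eqToHom e₁ ≫ (𝟙 x : x ⟶ x) ≫ eqToHom e₂ := hleft
  have hval := congrArg (fun (q : Z₁.1.left.1 ⟶ Z₂.1.left.1) =>
    ((q.toOrderHom k : Fin (Z₂.1.left.1.len + 1)) : ℕ)) h5
  dsimp at hval
  rw [hval]
  show ((((eqToHom e₁ : Z₁.1.left.1 ⟶ x) ≫ (𝟙 x ≫ eqToHom e₂)).toOrderHom k : Fin _) : ℕ) = _
  calc (((eqToHom e₂).toOrderHom (SimplexCategory.Hom.toOrderHom (𝟙 x)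
          ((eqToHom e₁).toOrderHom k)) : Fin _) : ℕ)
      = ((SimplexCategory.Hom.toOrderHom (𝟙 x) ((eqToHom e₁).toOrderHom k) : Fin _) : ℕ) :=
        simplex_eqToHom_val e₂ _
    _ = (((eqToHom e₁).toOrderHom k : Fin _) : ℕ) := rfl
    _ = (k : ℕ) := simplex_eqToHom_val e₁ k

theorem elemOf_natural {X Y : CostructuredArrow (mu C) S}
    (hX : (P S).obj X = Over.mk φ) (hY : (P S).obj Y = Over.mk φ) (g : X ⟶ Y)
    (hg : ∀ k : Fin (X.left.1.len + 1),
      ((g.left.1.toOrderHom k : Fin (Y.left.1.len + 1)) : ℕ) = (k : ℕ))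
    (i : Fin S.len) (h₁ : φ.toOrderHom 0 < i.succ)
    (h₂ : i.succ ≤ φ.toOrderHom (Fin.last x.len)) :
    elemOf X hX i h₁ h₂ = g.left.2 ≫ elemOf Y hY i h₁ h₂ := by
  have hlen : X.left.1.len = Y.left.1.len := by
    have hx := congrArg SimplexCategory.len (left_fst X hX)
    have hy := congrArg SimplexCategory.len (left_fst Y hY)
    omega
  set jX := pick X.hom.φ i (cond₁ X hX h₁) (cond₂ X hX h₂) with hjX
  set jY := pick Y.hom.φ i (cond₁ Y hY h₁) (cond₂ Y hY h₂) with hjY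
  have hw : X.hom = Wreath.Hom.comp ((mu C).map g.left) Y.hom := (CostructuredArrow.w g).symm
  have hφ : ∀ k, X.hom.φ k = Y.hom.φ (g.left.1.toOrderHom k) := fun k =>
    DFunLike.congr_fun (congrArg Wreath.Hom.φ hw) k
  set jX' : Fin Y.left.1.len := Fin.cast hlen jX with hjX'
  have e₁ : g.left.1.toOrderHom jX.castSucc = jX'.castSucc := by
    apply Fin.ext
    rw [hg jX.castSucc]
    simp [hjX']; rfl
  have e₂ : g.left.1.toOrderHom jX.succ = jX'.succ := by
    apply Fin.ext
    rw [hg jX.succ]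
    simp [hjX']; rfl
  have hC : Y.hom.φ jX'.castSucc < i.succ := by
    rw [← e₁, ← hφ]
    exact pick_specA _ _ _ _
  have hD : i.succ ≤ Y.hom.φ jX'.succ := by
    rw [← e₂, ← hφ]
    exact pick_specB _ _ _ _
  have hA : ((mu C).map g.left).φ jX.castSucc < jX'.succ := by
    show g.left.1.toOrderHom jX.castSucc < jX'.succ
    rw [Fin.lt_def, hg jX.castSucc]
    simp only [Fin.coe_castSucc, Fin.val_succ, hjX', Fin.coe_cast]
    have hc : ((Fin.cast hlen jX : Fin _) : ℕ) = (jX : ℕ) := rfl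
    omega
  have hB : jX'.succ ≤ ((mu C).map g.left).φ jX.succ := by
    show jX'.succ ≤ g.left.1.toOrderHom jX.succ
    rw [Fin.le_def, hg jX.succ]
    simp only [Fin.val_succ, hjX', Fin.coe_cast]
    have hc : ((Fin.cast hlen jX : Fin _) : ℕ) = (jX : ℕ) := rfl
    omega
  have key := comp_app_eq' ((mu C).map g.left) Y.hom X.hom hw
    (pick_specA _ _ _ _) (pick_specB _ _ _ _) jX' hA hB hC hD
  have ejj : jX' = jY := Wreath.mid_unique Y.hom.φ hC hD (pick_specA _ _ _ _) (pick_specB _ _ _ _)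
  show X.hom.app jX i _ _ = g.left.2 ≫ Y.hom.app jY i _ _
  rw [key]
  congr 1
  exact app_index_congr Y.hom ejj i hC hD _ _

theorem yonedaElem_eq {F : Cᵒᵖ ⥤ Type v} {a : C} (u : yoneda.obj a ⟶ F) {b : Cᵒᵖ}
    (g : b.unop ⟶ a) : u.app b g = F.map g.op (u.app (op a) (𝟙 a)) := by
  have h := ConcreteCategory.congr_hom (u.naturality g.op) (𝟙 a)
  simpa using h

/-- The functor from the fiber to the category of elements. -/
def Phi : Functor.Fiber (P S) (Over.mk φ) ⥤ CostructuredArrow yoneda (fiberPresheaf S x φ) where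
  obj Z := CostructuredArrow.mk (natOf Z.1 Z.2)
  map {Z₁ Z₂} g := CostructuredArrow.homMk g.1.left.2 (by
    apply NatTrans.ext
    funext b
    ext h
    funext i h₁ h₂
    show (h ≫ g.1.left.2) ≫ elemOf Z₂.1 Z₂.2 i h₁ h₂ = h ≫ elemOf Z₁.1 Z₁.2 i h₁ h₂
    rw [elemOf_natural Z₁.2 Z₂.2 g.1 (hlift_val g), Category.assoc])
  map_id Z := by apply CostructuredArrow.hom_ext; rfl
  map_comp f g := by apply CostructuredArrow.hom_ext; rfl

/-- The object part of the inverse functor. -/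
def psiObj (Y : CostructuredArrow yoneda (fiberPresheaf S x φ)) : CostructuredArrow (mu C) S :=
  CostructuredArrow.mk (Y := (x, Y.left)) (homOf Y.left (Y.hom.app (op Y.left) (𝟙 Y.left)))

theorem psiObj_P (Y : CostructuredArrow yoneda (fiberPresheaf S x φ)) :
    (P S).obj (psiObj Y) = Over.mk φ := rfl

/-- The morphism part of the inverse functor. -/
def psiMap {Y₁ Y₂ : CostructuredArrow yoneda (fiberPresheaf S x φ)} (g : Y₁ ⟶ Y₂) :
    psiObj Y₁ ⟶ psiObj Y₂ :=
  CostructuredArrow.homMk ((𝟙 x, g.left) : ((x, Y₁.left) : SimplexCategory × C) ⟶ (x, Y₂.left))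
    (by
      have hyon : ∀ i h₁ h₂, (Y₁.hom.app (op Y₁.left) (𝟙 Y₁.left)) i h₁ h₂ =
          g.left ≫ (Y₂.hom.app (op Y₂.left) (𝟙 Y₂.left)) i h₁ h₂ := by
        intro i h₁ h₂
        have hw := ConcreteCategory.congr_hom (NatTrans.congr_app (CostructuredArrow.w g).symm (op Y₁.left))
          (𝟙 Y₁.left)
        have hy := yonedaElem_eq Y₂.hom (b := op Y₁.left) (g.left)
        calc (Y₁.hom.app (op Y₁.left) (𝟙 Y₁.left)) i h₁ h₂
            = (Y₂.hom.app (op Y₁.left) (𝟙 Y₁.left ≫ g.left)) i h₁ h₂ := by rw [hw]; rfl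
          _ = (Y₂.hom.app (op Y₁.left) g.left) i h₁ h₂ := by rw [Category.id_comp]
          _ = g.left ≫ (Y₂.hom.app (op Y₂.left) (𝟙 Y₂.left)) i h₁ h₂ := by rw [hy]; rfl
      show Wreath.Hom.comp
          ((mu C).map ((𝟙 x, g.left) : ((x, Y₁.left) : SimplexCategory × C) ⟶ (x, Y₂.left)))
          (homOf Y₂.left (Y₂.hom.app (op Y₂.left) (𝟙 Y₂.left))) =
        homOf Y₁.left (Y₁.hom.app (op Y₁.left) (𝟙 Y₁.left))
      refine Wreath.Hom.ext' (by apply OrderHom.ext; funext k; rfl) ?_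
      intro j i hF₁ hF₂ hG₁ hG₂
      refine (Wreath.Hom.comp_app_eq _ _ hF₁ hF₂ j (Fin.castSucc_lt_succ (i := j)) (le_refl _)
        hG₁ hG₂).trans ?_
      exact (hyon i _ _).symm)

theorem psiMap_lift {Y₁ Y₂ : CostructuredArrow yoneda (fiberPresheaf S x φ)} (g : Y₁ ⟶ Y₂) :
    (P S).IsHomLift (𝟙 (Over.mk φ)) (psiMap g) := by
  refine CategoryTheory.IsHomLift.of_fac' (P S) (𝟙 (Over.mk φ)) _ (psiObj_P Y₁) (psiObj_P Y₂) ?_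
  simp only [eqToHom_refl, Category.id_comp, Category.comp_id]
  apply CommaMorphism.ext
  · rfl
  · exact Subsingleton.elim _ _

/-- The functor from the category of elements to the fiber. -/
def Psi : CostructuredArrow yoneda (fiberPresheaf S x φ) ⥤ Functor.Fiber (P S) (Over.mk φ) where
  obj Y := ⟨psiObj Y, psiObj_P Y⟩
  map g := ⟨psiMap g, psiMap_lift g⟩
  map_id Y := by
    apply Functor.Fiber.hom_ext
    apply CommaMorphism.ext
    · rfl
    · exact Subsingleton.elim _ _
  map_comp f g := by
    apply Functor.Fiber.hom_ext
    apply CommaMorphism.ext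
    · apply Prod.ext
      · exact (Category.id_comp (𝟙 x)).symm
      · rfl
    · exact Subsingleton.elim _ _

theorem mk_eq (X : CostructuredArrow (mu C) S) (hX : (P S).obj X = Over.mk φ) :
    CostructuredArrow.mk (Y := (x, X.left.2))
      (homOf X.left.2 ((natOf X hX).app (op X.left.2) (𝟙 X.left.2))) = X := by
  obtain ⟨⟨x₁, a⟩, ⟨⟨⟩⟩, F⟩ := X
  have e : x₁ = x := left_fst _ hX
  subst e
  have h2 : HEq ((P S).obj (⟨(x₁, a), ⟨⟨⟩⟩, F⟩ : CostructuredArrow (mu C) S)).hom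
      (Over.mk φ).hom := by rw [hX]
  have h3 : SimplexCategory.Hom.mk (a := x₁) (b := SimplexCategory.mk S.len) F.φ = φ :=
    eq_of_heq h2
  have h4 : φ.toOrderHom = F.φ := (congrArg SimplexCategory.Hom.toOrderHom h3).symm
  have h5 : homOf a ((natOf _ hX).app (op a) (𝟙 a)) = F := by
    apply Wreath.Hom.ext' h4
    intro j i hF₁ hF₂ hG₁ hG₂
    show 𝟙 a ≫ elemOf _ hX i _ _ = F.app j i hG₁ hG₂
    rw [Category.id_comp]
    exact app_index_congr F
      (Wreath.mid_unique F.φ (pick_specA _ _ _ _) (pick_specB _ _ _ _) hG₁ hG₂) i _ _ hG₁ hG₂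
  rw [h5]
  rfl

theorem mk_natOf_eq (Y : CostructuredArrow yoneda (fiberPresheaf S x φ))
    (h : (P S).obj (psiObj Y) = Over.mk φ) :
    CostructuredArrow.mk (natOf (psiObj Y) h) = Y := by
  obtain ⟨a, ⟨⟨⟩⟩, u⟩ := Y
  have hnat : natOf (psiObj (⟨a, ⟨⟨⟩⟩, u⟩ : CostructuredArrow yoneda (fiberPresheaf S x φ))) h
      = u := by
    apply NatTrans.ext
    funext b
    ext gg
    funext i h₁ h₂
    refine Eq.trans ?_ (congrFun (congrFun (congrFun (yonedaElem_eq u gg) i) h₁) h₂).symm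
    rfl
  rw [hnat]
  rfl

theorem fiber_conj {W₁ W₂ Z₁ Z₂ : Functor.Fiber (P S) (Over.mk φ)}
    (e₁ : W₁ = Z₁) (e₂ : W₂ = Z₂) (f : W₁ ⟶ W₂) (g : Z₁ ⟶ Z₂)
    (hΔ : ∀ (k : Fin (W₁.1.left.1.len + 1)) (k' : Fin (Z₁.1.left.1.len + 1)),
      (k : ℕ) = (k' : ℕ) →
      ((f.1.left.1.toOrderHom k : Fin _) : ℕ) = ((g.1.left.1.toOrderHom k' : Fin _) : ℕ))
    (hC : HEq f.1.left.2 g.1.left.2) :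
    f = eqToHom e₁ ≫ g ≫ eqToHom e₂.symm := by
  subst e₁ e₂
  have h1 : f.1 = g.1 := by
    apply CommaMorphism.ext
    · apply Prod.ext
      · apply SimplexCategory.Hom.ext
        apply OrderHom.ext
        funext k
        exact Fin.ext (hΔ k k rfl)
      · exact eq_of_heq hC
    · exact Subsingleton.elim _ _
  apply Functor.Fiber.hom_ext
  simp only [eqToHom_refl, Category.comp_id, Category.id_comp]
  exact h1

theorem costr_conj {W₁ W₂ Z₁ Z₂ : CostructuredArrow yoneda (fiberPresheaf S x φ)}
    (e₁ : W₁ = Z₁) (e₂ : W₂ = Z₂) (f : W₁ ⟶ W₂) (g : Z₁ ⟶ Z₂)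
    (h : HEq f.left g.left) : f = eqToHom e₁ ≫ g ≫ eqToHom e₂.symm := by
  subst e₁ e₂
  have : f = g := CostructuredArrow.hom_ext f g (eq_of_heq h)
  simp [this]

theorem PhiPsi : (Phi (S := S) (x := x) (φ := φ)) ⋙ Psi = 𝟭 _ := by
  refine CategoryTheory.Functor.ext (fun Z => Subtype.ext (mk_eq Z.1 Z.2)) ?_
  intro Z₁ Z₂ g
  refine fiber_conj (Subtype.ext (mk_eq Z₁.1 Z₁.2)) (Subtype.ext (mk_eq Z₂.1 Z₂.2)) _ g ?_ HEq.rfl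
  intro k k' hk
  exact hk.trans (hlift_val g k').symm

theorem PsiPhi : (Psi (S := S) (x := x) (φ := φ)) ⋙ Phi = 𝟭 _ := by
  refine CategoryTheory.Functor.ext (fun Y => mk_natOf_eq Y (psiObj_P _)) ?_
  intro Y₁ Y₂ g
  exact costr_conj (mk_natOf_eq Y₁ (psiObj_P _)) (mk_natOf_eq Y₂ (psiObj_P _)) _ g HEq.rfl

end FP

/-- Let `C` be a category, `S = ([n]; c_1, …, c_n)` an object of `Δ ≀ C` and
`P : μ/S ⥤ Δ/[n]` the canonical functor. For every object `([m], φ : [m] ⟶ [n])` of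
`Δ/[n]`, the fiber of `P` over it — the subcategory of `μ/S` of objects sent to
`([m], φ)` and morphisms sent to the identity — is isomorphic to the category of
elements of the presheaf `a ↦ ∏_{φ(0) < i ≤ φ(m)} Hom_C(a, c_i)` on `C` (the category
of elements being realized as the comma category `CostructuredArrow yoneda F`, whose
objects are pairs `(a, x)` with `x ∈ F(a)` and whose morphisms `(a, x) ⟶ (a', x')` are
morphisms `g : a ⟶ a'` with `F(g)(x') = x`). -/
theorem fiber_iso_elements {C : Type u} [Category.{v} C] (S : Wreath C)
    (x : SimplexCategory) (φ : x ⟶ SimplexCategory.mk S.len) :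
    ∃ (Φ : Functor.Fiber (Wreath.P S) (Over.mk φ) ⥤
        CostructuredArrow yoneda (fiberPresheaf S x φ))
      (Ψ : CostructuredArrow yoneda (fiberPresheaf S x φ) ⥤
        Functor.Fiber (Wreath.P S) (Over.mk φ)),
      Φ ⋙ Ψ = 𝟭 _ ∧ Ψ ⋙ Φ = 𝟭 _ := by
  exact ⟨FP.Phi, FP.Psi, FP.PhiPsi, FP.PsiPhi⟩

end Paper
end

section
/- Let A and B be small aspherical categories, M a locally small category with a terminal object, and i : A → M, j : B → M functors. Assume that for every object a of A the presheaf N_i(i(a)) on A is aspherical and for every object b of B the presheaf N_j(j(b)) on B is aspherical. Assume moreover that for every morphism f of M, N_i(f) is a weak equivalence of presheaves on A if and only if N_j(f) is a weak equivalence of presheaves on B. Then for every object X of M, the presheaf N_i(X) on A is aspherical if and only if the presheaf N_j(X) on B is aspherical. -/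
open CategoryTheory CategoryTheory.Limits Simplicial

universe w v u v₁ u₁ v₂ u₂

namespace Paper

/-- The map `X ⟶ Δ[1]` constant at vertex `ε`. -/
def vertexMap (X : SSet.{u}) (ε : Fin 2) : X ⟶ Δ[1] where
  app m := TypeCat.ofHom fun _ => SSet.stdSimplex.const 1 ε m
  naturality := by
    intro m m' f
    ext x
    apply congrArg ULift.up
    apply SimplexCategory.Hom.ext
    rfl

/-- Two maps of simplicial sets `f g : X ⟶ K` are directly homotopic if there is a
homotopy `X ⨯ Δ[1] ⟶ K` from `f` to `g`. -/
def DHomotopic {X K : SSet.{u}} (f g : X ⟶ K) : Prop :=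
  ∃ H : (X ⨯ Δ[1] : SSet.{u}) ⟶ K,
    prod.lift (𝟙 X) (vertexMap X 0) ≫ H = f ∧ prod.lift (𝟙 X) (vertexMap X 1) ≫ H = g

lemma DHomotopic.precomp {X Y K : SSet.{u}} (f : X ⟶ Y) {g g' : Y ⟶ K}
    (h : DHomotopic g g') : DHomotopic (f ≫ g) (f ≫ g') := by
  obtain ⟨H, h0, h1⟩ := h
  have key : ∀ ε : Fin 2, f ≫ vertexMap Y ε = vertexMap X ε := by
    intro ε
    apply SSet.hom_ext
    intro n
    rfl
  have e : ∀ ε : Fin 2, prod.lift (𝟙 X) (vertexMap X ε) ≫ prod.map f (𝟙 Δ[1]) =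
      f ≫ prod.lift (𝟙 Y) (vertexMap Y ε) := by
    intro ε
    apply Limits.prod.hom_ext
    · simp [key ε]
    · simp [key ε]
  refine ⟨prod.map f (𝟙 _) ≫ H, ?_, ?_⟩
  · rw [← Category.assoc, e 0, Category.assoc, h0]
  · rw [← Category.assoc, e 1, Category.assoc, h1]

/-- Homotopy classes of maps `X ⟶ K`: the quotient of `X ⟶ K` by the equivalence
relation generated by direct homotopy. -/
def HClass (X K : SSet.{u}) : Type u :=
  Quot (@DHomotopic X K)

/-- Precomposition on homotopy classes. -/
def precompHC {X Y K : SSet.{u}} (f : X ⟶ Y) : HClass Y K → HClass X K :=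
  Quot.map (fun g => f ≫ g) (fun _ _ h => h.precomp f)

/-- A map of simplicial sets is a weak homotopy equivalence (in the Kan-Quillen sense)
iff for every Kan complex `K`, precomposition induces a bijection on homotopy classes. -/
def IsWeakHomotopyEquiv {X Y : SSet.{u}} (f : X ⟶ Y) : Prop :=
  ∀ K : SSet.{u}, SSet.KanComplex K → Function.Bijective (precompHC (K := K) f)

/-- The nerve of a category, `ULift`ed so that nerves of categories in different universes
can be compared. -/
def nerveUp (A : Type u₁) [Category.{v₁} A] : SSet.{max w u₁ v₁} :=
  nerve A ⋙ CategoryTheory.uliftFunctor.{w, max u₁ v₁}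

/-- The map induced by a functor on (`ULift`ed) nerves. -/
def nerveUpMap {A : Type u₁} [Category.{v₁} A] {B : Type u₂} [Category.{v₂} B]
    (F : A ⥤ B) : nerveUp.{max u₂ v₂} A ⟶ nerveUp.{max u₁ v₁} B where
  app _ := TypeCat.ofHom fun x => ⟨x.down ⋙ F⟩
  naturality := fun _ _ _ => rfl

/-- A functor is a Thomason equivalence if its nerve is a weak homotopy equivalence of
simplicial sets. -/
def IsThomasonEquiv {A : Type u₁} [Category.{v₁} A] {B : Type u₂} [Category.{v₂} B]
    (F : A ⥤ B) : Prop :=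
  IsWeakHomotopyEquiv (nerveUpMap F)

/-- A category is aspherical if its nerve is weakly contractible, i.e. the unique map
from its nerve to the terminal simplicial set is a weak homotopy equivalence. -/
def Aspherical (A : Type u₁) [Category.{v₁} A] : Prop :=
  IsWeakHomotopyEquiv (terminal.from (nerve A))

/-- A functor `u : A ⥤ B` is aspherical if all the comma categories `u/b` are aspherical. -/
def AsphericalFunctor {A : Type u₁} [Category.{v₁} A] {B : Type u₂} [Category.{v₂} B]
    (u : A ⥤ B) : Prop :=
  ∀ b : B, Aspherical (CostructuredArrow u b)


universe u₃

variable {A : Type u} [SmallCategory A]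

/-- The nerve presheaf `N_i(X) : a ↦ Hom_M(i(a), X)` associated to a functor
`i : A ⥤ M` and an object `X` of `M`. -/
def nervePresheaf {M : Type u₃} [Category.{u} M] (i : A ⥤ M) (X : M) :
    Aᵒᵖ ⥤ Type u :=
  i.op ⋙ yoneda.obj X

/-- The morphism of presheaves `N_i(f) : N_i(X) ⟶ N_i(Y)` induced by `f : X ⟶ Y`. -/
def nervePresheafMap {M : Type u₃} [Category.{u} M] (i : A ⥤ M) {X Y : M} (f : X ⟶ Y) :
    nervePresheaf i X ⟶ nervePresheaf i Y :=
  Functor.whiskerLeft i.op (yoneda.map f)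

/-- A presheaf `F` on a small category `A` is aspherical if its category of elements
`A/F` (realized as the comma category `CostructuredArrow yoneda F`) is aspherical. -/
def PresheafAspherical (F : Aᵒᵖ ⥤ Type u) : Prop :=
  Aspherical (CostructuredArrow yoneda F)

/-- A morphism of presheaves `φ : F ⟶ G` on a small category `A` is a weak equivalence
if the induced functor `A/F ⥤ A/G` between the categories of elements is a Thomason
equivalence. -/
def PresheafWeakEquiv {F G : Aᵒᵖ ⥤ Type u} (φ : F ⟶ G) : Prop :=
  IsThomasonEquiv (CostructuredArrow.map (S := yoneda) φ)

section Aux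

lemma precompHC_comp {X Y Z K : SSet.{u}} (f : X ⟶ Y) (g : Y ⟶ Z) :
    precompHC (K := K) (f ≫ g) = precompHC f ∘ precompHC g := by
  funext q
  induction q using Quot.ind with
  | _ h => exact congrArg (Quot.mk _) (Category.assoc f g h)

lemma precompHC_id {X K : SSet.{u}} : precompHC (K := K) (𝟙 X) = id := by
  funext q
  induction q using Quot.ind with
  | _ h => exact congrArg (Quot.mk _) (Category.id_comp h)

lemma iwhe_of_iso {X Y : SSet.{u}} (e : X ≅ Y) : IsWeakHomotopyEquiv e.hom := by
  intro K _
  refine Function.bijective_iff_has_inverse.mpr ⟨precompHC e.inv, fun q => ?_, fun q => ?_⟩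
  · have : precompHC (K := K) (e.inv ≫ e.hom) q = precompHC e.inv (precompHC e.hom q) := by
      rw [precompHC_comp]; rfl
    rw [← this, e.inv_hom_id, precompHC_id]; rfl
  · have : precompHC (K := K) (e.hom ≫ e.inv) q = precompHC e.hom (precompHC e.inv q) := by
      rw [precompHC_comp]; rfl
    rw [← this, e.hom_inv_id, precompHC_id]; rfl

lemma iwhe_cancel_right {X Y Z : SSet.{u}} {f : X ⟶ Y} {g : Y ⟶ Z}
    (hg : IsWeakHomotopyEquiv g) :
    IsWeakHomotopyEquiv (f ≫ g) ↔ IsWeakHomotopyEquiv f := by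
  constructor <;> intro hh K hK
  · have := hh K hK
    rw [precompHC_comp] at this
    exact (Function.Bijective.of_comp_iff _ (hg K hK)).mp this
  · rw [precompHC_comp (K := K)]
    exact (Function.Bijective.of_comp_iff _ (hg K hK)).mpr (hh K hK)

lemma iwhe_cancel_left {X Y Z : SSet.{u}} {f : X ⟶ Y} {g : Y ⟶ Z}
    (hf : IsWeakHomotopyEquiv f) :
    IsWeakHomotopyEquiv (f ≫ g) ↔ IsWeakHomotopyEquiv g := by
  constructor <;> intro hh K hK
  · have := hh K hK
    rw [precompHC_comp] at this
    exact (Function.Bijective.of_comp_iff' (hf K hK) _).mp this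
  · rw [precompHC_comp (K := K)]
    exact (Function.Bijective.of_comp_iff' (hf K hK) _).mpr (hh K hK)

lemma iwhe_terminal_iff_of_iso {X Y : SSet.{u}} (e : X ≅ Y) :
    IsWeakHomotopyEquiv (terminal.from X) ↔ IsWeakHomotopyEquiv (terminal.from Y) := by
  rw [← terminal.comp_from e.hom]
  exact iwhe_cancel_left (iwhe_of_iso e)

/-- The `ULift`ed nerve is isomorphic to the plain nerve for a category in matching
universes. -/
def nerveUpIso (C : Type u) [Category.{u} C] : nerveUp.{u} C ≅ nerve C :=
  NatIso.ofComponents (fun n => Equiv.toIso Equiv.ulift) (fun f => rfl)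

lemma aspherical_iff_nerveUp (C : Type u) [Category.{u} C] :
    Aspherical C ↔ IsWeakHomotopyEquiv (terminal.from (nerveUp.{u} C)) :=
  (iwhe_terminal_iff_of_iso (nerveUpIso C)).symm

lemma nerveUpMap_comp_eq {A : Type u} [Category.{u} A] {B : Type u} [Category.{u} B]
    {C : Type u} [Category.{u} C] (F : A ⥤ B) (G : B ⥤ C) :
    nerveUpMap (F ⋙ G) = nerveUpMap F ≫ nerveUpMap G := rfl

lemma nerveUpMap_id_eq (A : Type u) [Category.{u} A] :
    nerveUpMap (𝟭 A) = 𝟙 (nerveUp.{u} A) := rfl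

end Aux
section Elements

universe u₄

variable {A : Type u} [SmallCategory A] {M : Type u₄} [Category.{u} M] [HasTerminal M]

lemma subsingleton_hom_nT (i : A ⥤ M) (G : Aᵒᵖ ⥤ Type u) :
    Subsingleton (G ⟶ nervePresheaf i (⊤_ M)) := by
  constructor
  intro f g
  ext a x
  exact Subsingleton.elim (α := i.obj a.unop ⟶ ⊤_ M) _ _

/-- The unique section of the nerve presheaf of the terminal object. -/
noncomputable def secT (i : A ⥤ M) (a : A) : yoneda.obj a ⟶ nervePresheaf i (⊤_ M) where
  app a' := TypeCat.ofHom fun _ => terminal.from (i.obj a'.unop)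
  naturality _ _ _ := by ext; exact Subsingleton.elim (α := i.obj _ ⟶ ⊤_ M) _ _

/-- The canonical functor `A ⥤ A/N_i(⊤)`. -/
noncomputable def toElemT (i : A ⥤ M) : A ⥤ CostructuredArrow yoneda (nervePresheaf i (⊤_ M)) where
  obj a := CostructuredArrow.mk (secT i a)
  map {a a'} g := CostructuredArrow.homMk g
    (@Subsingleton.elim _ (subsingleton_hom_nT i _) _ _)
  map_id a := by
    apply CostructuredArrow.hom_ext
    simp
  map_comp f g := by
    apply CostructuredArrow.hom_ext
    simp

lemma toElemT_comp_proj (i : A ⥤ M) :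
    toElemT i ⋙ CostructuredArrow.proj yoneda (nervePresheaf i (⊤_ M)) = 𝟭 A := rfl

lemma proj_comp_toElemT (i : A ⥤ M) :
    CostructuredArrow.proj yoneda (nervePresheaf i (⊤_ M)) ⋙ toElemT i = 𝟭 _ := by
  have hobj : ∀ X : CostructuredArrow yoneda (nervePresheaf i (⊤_ M)),
      (CostructuredArrow.proj yoneda (nervePresheaf i (⊤_ M)) ⋙ toElemT i).obj X =
        (𝟭 _).obj X := fun X =>
    (congrArg CostructuredArrow.mk
      (@Subsingleton.elim _ (subsingleton_hom_nT i _) (secT i X.left) X.hom)).trans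
      (CostructuredArrow.eq_mk X).symm
  refine CategoryTheory.Functor.ext hobj (fun X Y f => ?_)
  apply CostructuredArrow.hom_ext
  erw [CostructuredArrow.comp_left, CostructuredArrow.comp_left, CostructuredArrow.eqToHom_left, CostructuredArrow.eqToHom_left]
  erw [eqToHom_refl, eqToHom_refl, Category.id_comp, Category.comp_id]
  rfl

lemma iwhe_term_elemsT (i : A ⥤ M) (hA : Aspherical A) :
    IsWeakHomotopyEquiv (terminal.from
      (nerveUp.{u} (CostructuredArrow yoneda (nervePresheaf i (⊤_ M))))) := by
  have iso : nerveUp.{u} A ≅ nerveUp.{u} (CostructuredArrow yoneda (nervePresheaf i (⊤_ M))) :=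
    { hom := nerveUpMap (toElemT i)
      inv := nerveUpMap (CostructuredArrow.proj yoneda (nervePresheaf i (⊤_ M)))
      hom_inv_id := by rw [← nerveUpMap_comp_eq, toElemT_comp_proj, nerveUpMap_id_eq]
      inv_hom_id := by rw [← nerveUpMap_comp_eq, proj_comp_toElemT, nerveUpMap_id_eq] }
  exact (iwhe_terminal_iff_of_iso iso).mp ((aspherical_iff_nerveUp A).mp hA)

lemma presheafAspherical_iff_weakEquiv (i : A ⥤ M) (hA : Aspherical A) (X : M) :
    PresheafAspherical (nervePresheaf i X) ↔
      PresheafWeakEquiv (nervePresheafMap i (terminal.from X)) := by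
  refine (aspherical_iff_nerveUp _).trans ?_
  rw [← terminal.comp_from (nerveUpMap (CostructuredArrow.map (S := yoneda)
    (nervePresheafMap i (terminal.from X))))]
  exact iwhe_cancel_right (iwhe_term_elemsT i hA)

end Elements
/-- Let `A` and `B` be small aspherical categories, `M` a locally small category with a
terminal object, and `i : A ⥤ M`, `j : B ⥤ M` functors such that the presheaves
`N_i(i(a))` on `A` and `N_j(j(b))` on `B` are aspherical. If, for every morphism `f` of
`M`, `N_i(f)` is a weak equivalence of presheaves on `A` iff `N_j(f)` is a weak
equivalence of presheaves on `B`, then for every object `X` of `M` the presheaf `N_i(X)`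
is aspherical iff the presheaf `N_j(X)` is aspherical. -/
theorem presheafAspherical_iff
    {B : Type u} [SmallCategory B] {M : Type u₃} [Category.{u} M] [HasTerminal M]
    (hA : Aspherical A) (hB : Aspherical B)
    (i : A ⥤ M) (j : B ⥤ M)
    (h₁ : ∀ a : A, PresheafAspherical (nervePresheaf i (i.obj a)))
    (h₂ : ∀ b : B, PresheafAspherical (nervePresheaf j (j.obj b)))
    (h : ∀ {X Y : M} (f : X ⟶ Y),
      PresheafWeakEquiv (nervePresheafMap i f) ↔ PresheafWeakEquiv (nervePresheafMap j f))
    (X : M) :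
    PresheafAspherical (nervePresheaf i X) ↔ PresheafAspherical (nervePresheaf j X) := by
  rw [presheafAspherical_iff_weakEquiv i hA X, presheafAspherical_iff_weakEquiv j hB X]
  exact h (terminal.from X)

end Paper
end
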